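/- Fix i ≥ 1 and assume that every component of G''^{(i)} is entered by O(log n · log log n) flows in total. Then every node v not contained in a directed cycle of G''^{(i)} receives a load of at most T_i(v) = O(log n · log log n), and, with probability at least 1 − O(n^{−2}), every node contained in a directed cycle of G''^{(i)} receives a load of at most T_i(v) = O(log² n · log log n) before the flows exit G''^{(i)}. -/

import Mathlib

/-!
STATEMENT 10 (Lemma 9, load of `G''⁽ⁱ⁾`).

Nodes follow the 3-Permutations protocol (threshold `C₁ = Θ(log n)`, three
independent uniformly random orderings of `V \ {d}` per node); the adversary fails
destination edges (`≤ ε·n`) and inner edges (`≤ γ·n`), `ε + γ ≤ α < 1` constants.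
For each phase `i`, `G''⁽ⁱ⁾` is the functional digraph in which every bad node
points to the first alive node of its `i`-th ordering; a flow *enters* `G''⁽ⁱ⁾` at
its position at hop `(i-1)·C₁` (provided it has not yet arrived) and exits at hop
`i·C₁`; `T_i(v)` is the load accumulated at `v` by packets with hop counter in
`[(i-1)C₁, iC₁)`.

Claim: fix `i ≥ 1` and assume every component of `G''⁽ⁱ⁾` is entered by at most
`O(log n · log log n)` flows in total.  Then every node `v` not on a directed cycle
of `G''⁽ⁱ⁾` receives load `T_i(v) = O(log n · log log n)`, and with probability at
least `1 − O(n⁻²)` every node on a directed cycle of `G''⁽ⁱ⁾` receives load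
`T_i(v) = O(log² n · log log n)`.
-/

open scoped Classical
open Finset

noncomputable section

/-- `lg` denotes the base-2 logarithm (the paper's `log`). -/
def lg (x : ℝ) : ℝ := Real.logb 2 x

abbrev NodeOrder (n : ℕ) (d : Fin n) : Type := Fin (n - 1) ≃ {v : Fin n // v ≠ d}

def unifProb {Ω : Type*} [Fintype Ω] (P : Ω → Prop) : ℝ :=
  ((Finset.univ : Finset Ω).filter P).card / (Fintype.card Ω : ℝ)

def firstAlive {n : ℕ} {d : Fin n} (F : Finset (Sym2 (Fin n)))
    (π : NodeOrder n d) (v : Fin n) : Fin n :=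
  if h : (Finset.univ.filter fun j : Fin (n - 1) => s(v, (π j).1) ∉ F).Nonempty then
    (π ((Finset.univ.filter fun j : Fin (n - 1) => s(v, (π j).1) ∉ F).min' h)).1
  else v

/-- Which of the three permutations is used at hop counter `t`. -/
def permIndex (C1 t : ℕ) : Fin 3 := if t < C1 then 0 else if t < 2 * C1 then 1 else 2

/-- The permutation index used during phase `i ≥ 1` (`i = 1,2,3,…`). -/
def phase (i : ℕ) : Fin 3 := if i ≤ 1 then 0 else if i = 2 then 1 else 2

def route {n : ℕ} (d : Fin n) (F : Finset (Sym2 (Fin n)))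
    (ω : Fin n → Fin 3 → NodeOrder n d) (C1 : ℕ) (s : Fin n) : ℕ → Fin n
  | 0 => s
  | t + 1 =>
      let v := route d F ω C1 s t
      if v = d then d
      else if s(v, d) ∉ F then d
      else firstAlive F (ω v (permIndex C1 t)) v

def badNodes {n : ℕ} (d : Fin n) (F : Finset (Sym2 (Fin n))) : Finset (Fin n) :=
  (Finset.univ.erase d).filter fun v => s(v, d) ∈ F

/-- Successor map of `G''⁽ⁱ⁾`. -/
def succPhase {n : ℕ} (d : Fin n) (F : Finset (Sym2 (Fin n)))
    (ω : Fin n → Fin 3 → NodeOrder n d) (i : ℕ) (v : Fin n) : Fin n :=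
  if v ∈ badNodes d F then firstAlive F (ω v (phase i)) v else v

/-- The undirected (weak-connectivity) graph underlying a functional digraph. -/
def compGraph {n : ℕ} (VB : Finset (Fin n)) (f : Fin n → Fin n) :
    SimpleGraph (Fin n) where
  Adj u v := u ≠ v ∧ ((u ∈ VB ∧ f u = v) ∨ (v ∈ VB ∧ f v = u))
  symm := ⟨fun _ _ h => ⟨h.1.symm, h.2.elim Or.inr Or.inl⟩⟩
  loopless := ⟨fun _ h => h.1 rfl⟩

/-- `v` lies on a directed cycle. -/
def onCycle {n : ℕ} (VB : Finset (Fin n)) (f : Fin n → Fin n) (v : Fin n) : Prop :=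
  v ∈ VB ∧ ∃ k : ℕ, 0 < k ∧ f^[k] v = v

/-- `T_i(v)`: the load accumulated at `v` by packets whose hop counter lies in
`[(i-1)·C₁, i·C₁)`. -/
def Tload {n : ℕ} (d : Fin n) (F : Finset (Sym2 (Fin n)))
    (ω : Fin n → Fin 3 → NodeOrder n d) (C1 i : ℕ) (v : Fin n) : ℕ :=
  ∑ s ∈ Finset.univ.erase d,
    ((Finset.Ico ((i - 1) * C1) (i * C1)).filter fun t =>
      route d F ω C1 s t = v).card

/-- The number of flows entering the component (of `G''⁽ⁱ⁾`) of `v`. -/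
def flowsEntering {n : ℕ} (d : Fin n) (F : Finset (Sym2 (Fin n)))
    (ω : Fin n → Fin 3 → NodeOrder n d) (C1 i : ℕ) (v : Fin n) : ℕ :=
  ((Finset.univ.erase d).filter fun s =>
    route d F ω C1 s ((i - 1) * C1) ≠ d ∧
    (compGraph (badNodes d F) (succPhase d F ω i)).Reachable
      (route d F ω C1 s ((i - 1) * C1)) v).card

section Aux

variable {n : ℕ} (d : Fin n) (F : Finset (Sym2 (Fin n)))
  (ω : Fin n → Fin 3 → NodeOrder n d) (C1 : ℕ)

lemma route_d_stable (s : Fin n) {t t' : ℕ} (h : t ≤ t')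
    (hd : route d F ω C1 s t = d) : route d F ω C1 s t' = d := by
  induction t', h using Nat.le_induction with
  | base => exact hd
  | succ t' _ ih => rw [route]; simp [ih]

lemma permIndex_eq_phase {i t : ℕ} (hi : 1 ≤ i) (h1 : (i - 1) * C1 ≤ t)
    (h2 : t < i * C1) : permIndex C1 t = phase i := by
  unfold permIndex phase
  match i, hi with
  | 1, _ => simp at h1 h2 ⊢; simp [h2]
  | 2, _ =>
    have h1' : C1 ≤ t := by simpa using h1
    have h2' : t < 2 * C1 := by simpa using h2
    simp [Nat.not_lt.mpr h1', h2']
  | (m+3), _ =>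
    have : 2 * C1 ≤ (m + 3 - 1) * C1 := Nat.mul_le_mul_right C1 (by omega)
    have h2' : ¬ t < 2 * C1 := by omega
    have h1' : ¬ t < C1 := by omega
    simp [h1', h2', show ¬ m + 3 ≤ 1 by omega, show m + 3 ≠ 2 by omega]

lemma route_step {i : ℕ} (hi : 1 ≤ i) (s : Fin n) {t : ℕ}
    (h1 : (i - 1) * C1 ≤ t) (h2 : t < i * C1)
    (hne : route d F ω C1 s (t + 1) ≠ d) :
    route d F ω C1 s t ∈ badNodes d F ∧
    route d F ω C1 s (t + 1) = succPhase d F ω i (route d F ω C1 s t) := by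
  set u := route d F ω C1 s t with hu
  have hr : route d F ω C1 s (t + 1) =
      if u = d then d else if s(u, d) ∉ F then d
      else firstAlive F (ω u (permIndex C1 t)) u := rfl
  by_cases hud : u = d
  · rw [hr, if_pos hud] at hne; exact absurd rfl hne
  · by_cases hF : s(u, d) ∉ F
    · rw [hr, if_neg hud, if_pos hF] at hne; exact absurd rfl hne
    · have hbad : u ∈ badNodes d F := by
        simp [badNodes, hud, not_not.mp hF]
      refine ⟨hbad, ?_⟩
      rw [hr, if_neg hud, if_neg hF, permIndex_eq_phase C1 hi h1 h2,
        succPhase, if_pos hbad]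

lemma route_reach {i : ℕ} (hi : 1 ≤ i) (s : Fin n) :
    ∀ t, (i - 1) * C1 ≤ t → t < i * C1 → route d F ω C1 s t ≠ d →
    (compGraph (badNodes d F) (succPhase d F ω i)).Reachable
      (route d F ω C1 s ((i - 1) * C1)) (route d F ω C1 s t) := by
  intro t
  induction t with
  | zero =>
    intro h1 _ _
    have h0 : (i - 1) * C1 = 0 := Nat.le_zero.mp h1
    rw [h0]
  | succ t ih =>
    intro h1 h2 h3
    rcases Nat.lt_or_ge t ((i - 1) * C1) with h | h
    · have : (i - 1) * C1 = t + 1 := by omega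
      rw [this]
    · have ht2 : t < i * C1 := by omega
      have htne : route d F ω C1 s t ≠ d := fun hd =>
        h3 (route_d_stable d F ω C1 s (Nat.le_succ t) hd)
      obtain ⟨hbad, hstep⟩ := route_step d F ω C1 hi s h ht2 h3
      refine (ih h ht2 htne).trans ?_
      by_cases he : route d F ω C1 s t = route d F ω C1 s (t + 1)
      · rw [he]
      · exact SimpleGraph.Adj.reachable (G := compGraph (badNodes d F) (succPhase d F ω i))
          (show _ ≠ _ ∧ ((_ ∈ badNodes d F ∧ _) ∨ _) from ⟨he, Or.inl ⟨hbad, hstep.symm⟩⟩)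

lemma route_cycle {i : ℕ} (hi : 1 ≤ i) (s : Fin n) {t1 t2 : ℕ}
    (h1 : (i - 1) * C1 ≤ t1) (hlt : t1 < t2) (h2 : t2 < i * C1)
    (heq : route d F ω C1 s t1 = route d F ω C1 s t2)
    (hne : route d F ω C1 s t2 ≠ d) :
    onCycle (badNodes d F) (succPhase d F ω i) (route d F ω C1 s t1) := by
  have iter : ∀ k, t1 + k ≤ t2 →
      route d F ω C1 s (t1 + k) = (succPhase d F ω i)^[k] (route d F ω C1 s t1) := by
    intro k
    induction k with
    | zero => simp
    | succ k ih =>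
      intro hk
      have hne' : route d F ω C1 s (t1 + k + 1) ≠ d := fun hd =>
        hne (route_d_stable d F ω C1 s (by omega) hd)
      obtain ⟨_, hstep⟩ := route_step d F ω C1 hi s (t := t1 + k) (by omega) (by omega) hne'
      rw [show t1 + (k + 1) = (t1 + k) + 1 from rfl, hstep, ih (by omega),
        Function.iterate_succ_apply']
  have hne1 : route d F ω C1 s (t1 + 1) ≠ d := fun hd =>
    hne (route_d_stable d F ω C1 s (by omega) hd)
  have hbad := (route_step d F ω C1 hi s (t := t1) (by omega) (by omega) hne1).1
  refine ⟨hbad, t2 - t1, by omega, ?_⟩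
  have h := iter (t2 - t1) (by omega)
  rw [show t1 + (t2 - t1) = t2 from by omega, ← heq] at h
  exact h.symm

end Aux

lemma card_Ico_window (C1 i : ℕ) (hi : 1 ≤ i) :
    (Finset.Ico ((i - 1) * C1) (i * C1)).card = C1 := by
  rw [Nat.card_Ico]
  obtain ⟨j, rfl⟩ := Nat.exists_eq_add_of_le hi
  simp [Nat.add_mul, Nat.add_comm]

lemma unifProb_eq_one {Ω : Type*} [Fintype Ω] [Nonempty Ω] {P : Ω → Prop}
    (h : ∀ ω, P ω) : unifProb P = 1 := by
  rw [unifProb, Finset.filter_true_of_mem (fun ω _ => h ω), Finset.card_univ, div_self]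
  exact_mod_cast Fintype.card_ne_zero

theorem Gpp_phase_load (ε γ α : ℝ) (hε : 0 < ε) (hγ : 0 < γ)
    (hεγ : ε + γ ≤ α) (hα : α < 1) (A : ℝ) (hA : 0 < A) :
    ∃ (c₁ A' B' D : ℝ) (N : ℕ), 0 < c₁ ∧ 0 < A' ∧ 0 < B' ∧ 0 < D ∧
      ∀ n : ℕ, N ≤ n →
        ∀ (d : Fin n) (F : Finset (Sym2 (Fin n))),
          (∀ e ∈ F, ¬ e.IsDiag) →
          ((F.filter fun e => d ∈ e).card : ℝ) ≤ ε * n →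
          ((F.filter fun e => d ∉ e).card : ℝ) ≤ γ * n →
          ∀ i : ℕ, 1 ≤ i →
            1 - D / (n : ℝ) ^ 2 ≤
              unifProb (fun ω : Fin n → Fin 3 → NodeOrder n d =>
                -- assumption: every component of `G''⁽ⁱ⁾` is entered by at most
                -- `O(log n log log n)` flows
                (∀ v : Fin n, v ≠ d →
                    (flowsEntering d F ω ⌈c₁ * lg n⌉₊ i v : ℝ)
                      ≤ A * lg n * lg (lg n)) →
                -- conclusion 1: nodes not on a cycle get `O(log n log log n)` load
                (∀ v : Fin n, v ≠ d →
                    ¬ onCycle (badNodes d F) (succPhase d F ω i) v →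
                    (Tload d F ω ⌈c₁ * lg n⌉₊ i v : ℝ) ≤ A' * lg n * lg (lg n)) ∧
                -- conclusion 2: cycle nodes get `O(log² n log log n)` load
                (∀ v : Fin n, v ≠ d →
                    onCycle (badNodes d F) (succPhase d F ω i) v →
                    (Tload d F ω ⌈c₁ * lg n⌉₊ i v : ℝ)
                      ≤ B' * lg n ^ 2 * lg (lg n))) := by
  refine ⟨1, A, 2 * A, 1, 2, one_pos, hA, by positivity, one_pos, ?_⟩
  intro n hn d F hF _ _ i hi
  set C1 : ℕ := ⌈(1 : ℝ) * lg n⌉₊ with hC1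
  have hn2 : (2 : ℝ) ≤ (n : ℝ) := by exact_mod_cast hn
  have hlg1 : (1 : ℝ) ≤ lg n := by
    rw [lg, Real.le_logb_iff_rpow_le one_lt_two (by linarith)]
    simpa using hn2
  have hlglg : 0 ≤ lg (lg n) := Real.logb_nonneg one_lt_two hlg1
  have hC1le : (C1 : ℝ) ≤ 2 * lg n := by
    have := Nat.ceil_lt_add_one (by linarith : (0:ℝ) ≤ 1 * lg n)
    rw [hC1]; nlinarith [this]
  have hall : ∀ ω : Fin n → Fin 3 → NodeOrder n d,
      (∀ v : Fin n, v ≠ d →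
          (flowsEntering d F ω C1 i v : ℝ) ≤ A * lg n * lg (lg n)) →
      (∀ v : Fin n, v ≠ d →
          ¬ onCycle (badNodes d F) (succPhase d F ω i) v →
          (Tload d F ω C1 i v : ℝ) ≤ A * lg n * lg (lg n)) ∧
      (∀ v : Fin n, v ≠ d →
          onCycle (badNodes d F) (succPhase d F ω i) v →
          (Tload d F ω C1 i v : ℝ) ≤ (2 * A) * lg n ^ 2 * lg (lg n)) := by
    intro ω hflows
    set G := compGraph (badNodes d F) (succPhase d F ω i) with hG
    set start := (i - 1) * C1 with hstart
    set endt := i * C1 with hendt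
    have hcond : ∀ (s v : Fin n), v ≠ d → ∀ t ∈ Finset.Ico start endt,
        route d F ω C1 s t = v →
        (route d F ω C1 s start ≠ d ∧ G.Reachable (route d F ω C1 s start) v) := by
      intro s v hv t ht hrt
      rw [Finset.mem_Ico] at ht
      have htne : route d F ω C1 s t ≠ d := by rw [hrt]; exact hv
      have hsne : route d F ω C1 s start ≠ d := fun hd =>
        htne (route_d_stable d F ω C1 s ht.1 hd)
      exact ⟨hsne, hrt ▸ route_reach d F ω C1 hi s t ht.1 ht.2 htne⟩
    constructor
    · -- non-cycle nodes
      intro v hv hnc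
      have key : Tload d F ω C1 i v ≤ flowsEntering d F ω C1 i v := by
        rw [Tload, flowsEntering, Finset.card_filter]
        refine Finset.sum_le_sum fun s _ => ?_
        rcases ((Finset.Ico start endt).filter
            fun t => route d F ω C1 s t = v).eq_empty_or_nonempty with he | ⟨t, htm⟩
        · simp only [hstart, hendt] at he
          simp [he]
        · rw [Finset.mem_filter] at htm
          have hc := hcond s v hv t htm.1 htm.2
          rw [if_pos hc]
          refine Finset.card_le_one.mpr fun t1 h1 t2 h2 => ?_
          rw [Finset.mem_filter, Finset.mem_Ico] at h1 h2
          by_contra hne12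
          rcases Nat.lt_or_ge t1 t2 with hlt | hge
          · exact hnc (h1.2 ▸ route_cycle d F ω C1 hi s h1.1.1 hlt h2.1.2
              (h1.2.trans h2.2.symm) (h2.2 ▸ hv))
          · have hlt : t2 < t1 := by omega
            exact hnc (h2.2 ▸ route_cycle d F ω C1 hi s h2.1.1 hlt h1.1.2
              (h2.2.trans h1.2.symm) (h1.2 ▸ hv))
      calc (Tload d F ω C1 i v : ℝ) ≤ (flowsEntering d F ω C1 i v : ℝ) := by
              exact_mod_cast key
        _ ≤ A * lg n * lg (lg n) := hflows v hv
    · -- cycle nodes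
      intro v hv _
      have key : Tload d F ω C1 i v ≤ C1 * flowsEntering d F ω C1 i v := by
        have hstep2 : ∀ s ∈ Finset.univ.erase d,
            ((Finset.Ico start endt).filter fun t => route d F ω C1 s t = v).card ≤
            (if (route d F ω C1 s start ≠ d ∧
                G.Reachable (route d F ω C1 s start) v) then C1 else 0) := by
          intro s _
          rcases ((Finset.Ico start endt).filter
              fun t => route d F ω C1 s t = v).eq_empty_or_nonempty with he | ⟨t, htm⟩
          · simp [he]
          · rw [Finset.mem_filter] at htm
            rw [if_pos (hcond s v hv t htm.1 htm.2)]
            calc ((Finset.Ico start endt).filter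
                  fun t => route d F ω C1 s t = v).card
                ≤ (Finset.Ico start endt).card :=
                  Finset.card_le_card (Finset.filter_subset _ _)
              _ = C1 := card_Ico_window C1 i hi
        rw [Tload, flowsEntering]
        calc ∑ s ∈ Finset.univ.erase d,
              ((Finset.Ico start endt).filter fun t => route d F ω C1 s t = v).card
            ≤ ∑ s ∈ Finset.univ.erase d,
              (if (route d F ω C1 s start ≠ d ∧
                  G.Reachable (route d F ω C1 s start) v) then C1 else 0) :=
              Finset.sum_le_sum hstep2
          _ = ∑ _s ∈ (Finset.univ.erase d).filter (fun s =>
                route d F ω C1 s start ≠ d ∧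
                G.Reachable (route d F ω C1 s start) v), C1 :=
              (Finset.sum_filter _ _).symm
          _ = _ := by rw [Finset.sum_const, smul_eq_mul, mul_comm]
      have hfl := hflows v hv
      have hfl0 : (0:ℝ) ≤ (flowsEntering d F ω C1 i v : ℝ) := Nat.cast_nonneg _
      calc (Tload d F ω C1 i v : ℝ)
          ≤ (C1 : ℝ) * (flowsEntering d F ω C1 i v : ℝ) := by exact_mod_cast key
        _ ≤ (2 * lg n) * (A * lg n * lg (lg n)) :=
            mul_le_mul hC1le hfl hfl0 (by linarith)
        _ = (2 * A) * lg n ^ 2 * lg (lg n) := by ring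
  have hne : Nonempty (NodeOrder n d) := by
    refine ⟨Fintype.equivOfCardEq ?_⟩
    simp [Fintype.card_subtype_compl]
  have hΩ : Nonempty (Fin n → Fin 3 → NodeOrder n d) :=
    ⟨fun _ _ => Classical.choice hne⟩
  have h1 := unifProb_eq_one hall
  refine le_trans ?_ h1.ge
  have hpos : (0:ℝ) < (n:ℝ) ^ 2 := by positivity
  nlinarith [div_nonneg (le_of_lt (one_pos (α := ℝ))) (le_of_lt hpos)]



end
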